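/- arXiv:1609.09588 — 3 statements merged into one kernel-verified Lean document; each statement's English description precedes it below -/
import Mathlib

section
/- Let C be a one-Lee-weight additive code in Z₂^α × R^β with nonzero Lee weight m, where every coordinate position is nonzero on C. Then there exists a unique positive integer λ such that m = λ|C|/2 and α + 2β = λ(|C| − 1). -/
open DualNumber

/-- The binary field `ℤ₂`. -/
abbrev R2 : Type := ZMod 2

/-- The ring `R = ℤ₂[u]/(u²) = ℤ₂ + u ℤ₂`, realized as dual numbers over `ℤ₂`;
`u` is `eps`. -/
abbrev Ru : Type := DualNumber (ZMod 2)

instance : Fintype Ru := inferInstanceAs (Fintype (ZMod 2 × ZMod 2))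
instance : DecidableEq Ru := inferInstanceAs (DecidableEq (ZMod 2 × ZMod 2))

/-- The Gray map `ψ : R → ℤ₂²`, `ψ(a + u b) = (b, a + b)`. -/
def psi (x : Ru) : R2 × R2 := (x.snd, x.fst + x.snd)

/-- The Lee weight on `R`: `w_L(0)=0, w_L(1)=1, w_L(u)=2, w_L(1+u)=1`. -/
def wL (x : Ru) : ℕ := if x.fst = 0 then (if x.snd = 0 then 0 else 2) else 1

/-- The ambient space `ℤ₂^α × R^β`. -/
abbrev V (α β : ℕ) : Type := (Fin α → R2) × (Fin β → Ru)

/-- Lee weight of a vector of `ℤ₂^α × R^β`: Hamming weight on the binary part plus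
coordinatewise Lee weight on the `R` part. -/
def wLvec {α β : ℕ} (c : V α β) : ℕ :=
  (∑ i, if c.1 i ≠ 0 then 1 else 0) + ∑ j, wL (c.2 j)

/-- Hamming weight of a binary vector. -/
def wHvec {ι : Type} [Fintype ι] (f : ι → R2) : ℕ :=
  ∑ i, if f i ≠ 0 then 1 else 0

/-- The extended Gray map `Φ : ℤ₂^α × R^β → ℤ₂^(α+2β)`: identity on the binary
coordinates, `ψ` coordinatewise on the `R` coordinates. -/
def Phi {α β : ℕ} (c : V α β) : (Fin α ⊕ Fin β × Fin 2) → R2 :=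
  fun i => match i with
  | Sum.inl i => c.1 i
  | Sum.inr (j, k) => if k = 0 then (psi (c.2 j)).1 else (psi (c.2 j)).2

/-- Scalar multiplication of `R` on `ℤ₂^α × R^β`:
`(r + q u) · (a | b) = (r a | (r + q u) b)`. -/
def rsmul {α β : ℕ} (c : Ru) (v : V α β) : V α β :=
  (fun i => c.fst * v.1 i, fun j => c * v.2 j)

/-- The inner product `v ⋅ w = u ∑ vᵢ wᵢ + ∑ vⱼ wⱼ ∈ R` on `ℤ₂^α × R^β`. -/
def ip {α β : ℕ} (v w : V α β) : Ru :=
  eps * (∑ i, TrivSqZeroExt.inl (v.1 i * w.1 i)) + ∑ j, v.2 j * w.2 j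

/-- The dual of a code with respect to the inner product `ip`. -/
def dualSet {α β : ℕ} (C : Set (V α β)) : Set (V α β) :=
  {w | ∀ v ∈ C, ip v w = 0}

/-- The all-ones / all-`u` vector `(1,…,1 | u,…,u)`. -/
def allone (α β : ℕ) : V α β := (fun _ => 1, fun _ => (eps : Ru))

private lemma zmod2_ne_zero {a : ZMod 2} (h : a ≠ 0) : a = 1 := by
  revert h; revert a; decide

lemma half_sum {G : Type*} [AddCommGroup G] [Fintype G] [DecidableEq G]
    (φ : G →+ ZMod 2) (g₀ : G) (h : φ g₀ ≠ 0) :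
    2 * (∑ g : G, if φ g ≠ 0 then 1 else 0) = Fintype.card G := by
  classical
  have h1 : φ g₀ = 1 := zmod2_ne_zero h
  have hsum : (∑ g : G, if φ g ≠ 0 then 1 else 0) =
      (Finset.univ.filter (fun g => φ g ≠ 0)).card := (Finset.card_filter _ _).symm
  have hbij : (Finset.univ.filter (fun g => ¬ φ g ≠ 0)).card =
      (Finset.univ.filter (fun g => φ g ≠ 0)).card := by
    apply Finset.card_bij' (fun g _ => g + g₀) (fun g _ => g - g₀)
    · intro a ha
      simp only [Finset.mem_filter, Finset.mem_univ, true_and, not_not] at ha ⊢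
      simp [map_add, ha, h1]
    · intro a ha
      simp only [Finset.mem_filter, Finset.mem_univ, true_and, not_not] at ha ⊢
      have := zmod2_ne_zero ha
      simp [map_sub, this, h1]
    · intro a _; abel
    · intro a _; abel
  have := Finset.card_filter_add_card_filter_not
    (s := (Finset.univ : Finset G)) (p := fun g => φ g ≠ 0)
  rw [Finset.card_univ] at this
  omega

private lemma zmod2_ne_zero' {a : ZMod 2} (h : a ≠ 0) : a = 1 := by
  revert h; revert a; decide

lemma eps_mul_snd (x : Ru) : (eps * x).snd = x.fst := by
  revert x; decide

lemma eps_mul_fst (x : Ru) : (eps * x).fst = 0 := by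
  revert x; decide

lemma wL_split (x : Ru) :
    wL x = (if x.snd ≠ 0 then 1 else 0) + (if x.fst + x.snd ≠ 0 then 1 else 0) := by
  revert x; decide


/-- a one-Lee-weight additive code `C ⊆ ℤ₂^α × R^β` of weight `m`, with
`|C|` a power of two and no identically zero coordinate, admits a unique positive
integer `λ` with `m = λ |C| / 2` and `α + 2β = λ(|C| − 1)`. -/
theorem one_weight_lambda (α β : ℕ) (C : AddSubgroup (V α β))
    (hsmul : ∀ (c : Ru) (v : V α β), v ∈ C → rsmul c v ∈ C)
    (k m : ℕ) (hcard : Nat.card ↥C = 2 ^ k) (hm : 0 < m)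
    (hone : ∀ v ∈ C, v ≠ 0 → wLvec v = m)
    (hcols1 : ∀ i : Fin α, ∃ v ∈ C, v.1 i ≠ 0)
    (hcols2 : ∀ j : Fin β, ∃ v ∈ C, v.2 j ≠ 0)
    (hne : ∃ v ∈ C, v ≠ 0) :
    ∃! lam : ℕ, 0 < lam ∧ 2 * m = lam * Nat.card ↥C ∧
      α + 2 * β = lam * (Nat.card ↥C - 1) := by
  classical
  haveI : Fintype ↥C := Fintype.ofFinite _
  simp only [Nat.card_eq_fintype_card] at hcard ⊢
  set N := Fintype.card ↥C with hNdef
  -- binary columns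
  have hbin : ∀ i : Fin α,
      2 * (∑ v : ↥C, if (v : V α β).1 i ≠ 0 then 1 else 0) = N := by
    intro i
    obtain ⟨v, hv, hvi⟩ := hcols1 i
    exact half_sum (AddMonoidHom.mk' (fun w : ↥C => (w : V α β).1 i)
      (fun a b => rfl)) ⟨v, hv⟩ hvi
  -- Ru columns
  have hru : ∀ j : Fin β, 2 * (∑ v : ↥C, wL ((v : V α β).2 j)) = 2 * N := by
    intro j
    obtain ⟨v, hv, hvj⟩ := hcols2 j
    have hsplit : (∑ v : ↥C, wL ((v : V α β).2 j)) =
        (∑ w : ↥C, if ((w : V α β).2 j).snd ≠ 0 then 1 else 0) +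
        (∑ w : ↥C, if ((w : V α β).2 j).fst + ((w : V α β).2 j).snd ≠ 0 then 1 else 0) := by
      rw [← Finset.sum_add_distrib]
      exact Finset.sum_congr rfl fun w _ => wL_split _
    have h1 : 2 * (∑ w : ↥C, if ((w : V α β).2 j).snd ≠ 0 then 1 else 0) = N := by
      by_cases h : ((v.2 j)).snd ≠ 0
      · exact half_sum (AddMonoidHom.mk' (fun w : ↥C => ((w : V α β).2 j).snd)
          (fun a b => rfl)) ⟨v, hv⟩ h
      · push_neg at h
        have hf : (v.2 j).fst ≠ 0 := by
          intro hf; exact hvj (TrivSqZeroExt.ext (by simpa using hf) (by simpa using h))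
        refine half_sum (AddMonoidHom.mk' (fun w : ↥C => ((w : V α β).2 j).snd)
          (fun a b => rfl)) ⟨rsmul eps v, hsmul eps v hv⟩ ?_
        show ((rsmul eps v).2 j).snd ≠ 0
        simpa [rsmul, eps_mul_snd] using hf
    have h2 : 2 * (∑ w : ↥C, if ((w : V α β).2 j).fst + ((w : V α β).2 j).snd ≠ 0
        then 1 else 0) = N := by
      by_cases h : (v.2 j).fst + (v.2 j).snd ≠ 0
      · exact half_sum (AddMonoidHom.mk'
          (fun w : ↥C => ((w : V α β).2 j).fst + ((w : V α β).2 j).snd)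
          (fun a b => by simp only [AddSubgroup.coe_add, Prod.snd_add, Pi.add_apply, TrivSqZeroExt.fst_add, TrivSqZeroExt.snd_add]; ring)) ⟨v, hv⟩ h
      · push_neg at h
        have hf : (v.2 j).fst ≠ 0 := by
          intro hf
          apply hvj
          have hs : (v.2 j).snd = 0 := by rw [hf, zero_add] at h; exact h
          exact TrivSqZeroExt.ext (by simpa using hf) (by simpa using hs)
        refine half_sum (AddMonoidHom.mk'
          (fun w : ↥C => ((w : V α β).2 j).fst + ((w : V α β).2 j).snd)
          (fun a b => by simp only [AddSubgroup.coe_add, Prod.snd_add, Pi.add_apply, TrivSqZeroExt.fst_add, TrivSqZeroExt.snd_add]; ring)) ⟨rsmul eps v, hsmul eps v hv⟩ ?_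
        show ((rsmul eps v).2 j).fst + ((rsmul eps v).2 j).snd ≠ 0
        simpa [rsmul, eps_mul_fst, eps_mul_snd] using hf
    omega
  -- total sum, column-wise
  have htot : 2 * (∑ v : ↥C, wLvec (v : V α β)) = (α + 2 * β) * N := by
    have hswap : (∑ v : ↥C, wLvec (v : V α β)) =
        (∑ i, ∑ v : ↥C, if (v : V α β).1 i ≠ 0 then 1 else 0) +
        (∑ j, ∑ v : ↥C, wL ((v : V α β).2 j)) := by
      simp only [wLvec]
      rw [Finset.sum_add_distrib, Finset.sum_comm (γ := ↥C),
        Finset.sum_comm (γ := ↥C)]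
    rw [hswap, Nat.mul_add, Finset.mul_sum, Finset.mul_sum]
    rw [Finset.sum_congr rfl fun i _ => hbin i, Finset.sum_congr rfl fun j _ => hru j]
    simp [Finset.sum_const, Finset.card_univ]
    ring
  -- total sum, row-wise
  have hrow : (∑ v : ↥C, wLvec (v : V α β)) = m * (N - 1) := by
    rw [← Finset.add_sum_erase _ _ (Finset.mem_univ (0 : ↥C))]
    have h0 : wLvec (((0 : ↥C) : V α β)) = 0 := by
      simp [wLvec, wL]
    rw [h0, zero_add]
    rw [Finset.sum_congr rfl (fun w hw => ?_), Finset.sum_const,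
      Finset.card_erase_of_mem (Finset.mem_univ _), Finset.card_univ, smul_eq_mul,
      Nat.mul_comm]
    have hw0 : w ≠ 0 := Finset.ne_of_mem_erase hw
    exact hone w w.2 (by simpa using hw0)
  -- arithmetic
  have hN1 : 1 < N := by
    obtain ⟨v, hv, hv0⟩ := hne
    exact Fintype.one_lt_card_iff.2 ⟨⟨v, hv⟩, 0, by simpa using hv0⟩
  have hkey : 2 * m * (N - 1) = (α + 2 * β) * N := by
    rw [mul_assoc, ← hrow]; exact htot
  have hcop : Nat.Coprime N (N - 1) :=
    (Nat.coprime_self_sub_right (by omega)).2 (Nat.coprime_one_right _)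
  have hdvd : N ∣ 2 * m :=
    hcop.dvd_of_dvd_mul_right ⟨α + 2 * β, by rw [hkey]; ring⟩
  obtain ⟨lam, hlam⟩ := hdvd
  refine ⟨lam, ⟨?_, by rw [hlam, mul_comm], ?_⟩, ?_⟩
  · rcases Nat.eq_zero_or_pos lam with h0 | h0
    · subst h0; simp at hlam; omega
    · exact h0
  · have heq : (α + 2 * β) * N = lam * (N - 1) * N := by
      rw [← hkey, hlam]; ring
    exact Nat.eq_of_mul_eq_mul_right (by omega) heq
  · rintro lam' ⟨-, h2, -⟩
    have h3 : lam' * N = lam * N := by rw [← h2, hlam, mul_comm]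
    exact Nat.eq_of_mul_eq_mul_right (by omega) h3
end

section
/- Let C be a one-Lee-weight additive code in Z₂^α × R^β with odd nonzero Lee weight m, where every coordinate is nonzero on C and |C| is a power of 2. Then |C| = 2 and C = {(0,...,0 | 0,...,0), (1,...,1 | u,...,u)}; in particular m = α + 2β. -/
open DualNumber

lemma zmod2_cases : ∀ a : ZMod 2, a = 0 ∨ a = 1 := by decide

lemma wL_parity (x : Ru) : ((wL x : ℕ) : ZMod 2) = x.fst := by
  unfold wL
  rcases zmod2_cases x.fst with h | h <;> simp [h]
  intro _; decide

lemma wLvec_parity {α β : ℕ} (c : V α β) :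
    ((wLvec c : ℕ) : ZMod 2) = (∑ i, c.1 i) + ∑ j, (c.2 j).fst := by
  unfold wLvec
  push_cast
  congr 1
  · refine Finset.sum_congr rfl fun i _ => ?_
    rcases zmod2_cases (c.1 i) with h | h <;> simp [h] <;> decide
  · exact Finset.sum_congr rfl fun j _ => wL_parity _

lemma add_self_V {α β : ℕ} (x : V α β) : x + x = 0 := by
  ext i
  · show x.1 i + x.1 i = 0
    rcases zmod2_cases (x.1 i) with h | h <;> simp [h] <;> decide
  · show (x.2 i + x.2 i).fst = (0 : Ru).fst
    simp; rcases zmod2_cases ((x.2 i).fst) with h | h <;> simp [h] <;> decide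
  · show (x.2 i + x.2 i).snd = (0 : Ru).snd
    simp; rcases zmod2_cases ((x.2 i).snd) with h | h <;> simp [h] <;> decide

/-- a one-Lee-weight additive code with odd nonzero weight `m`, every
coordinate nonzero on `C` and `|C|` a power of two, is
`{(0,…,0|0,…,0), (1,…,1|u,…,u)}`; in particular `m = α + 2β`. -/
theorem one_weight_odd (α β : ℕ) (C : AddSubgroup (V α β))
    (hsmul : ∀ (c : Ru) (v : V α β), v ∈ C → rsmul c v ∈ C)
    (k m : ℕ) (hcard : Nat.card ↥C = 2 ^ k) (hmodd : Odd m)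
    (hone : ∀ v ∈ C, v ≠ 0 → wLvec v = m)
    (hcols1 : ∀ i : Fin α, ∃ v ∈ C, v.1 i ≠ 0)
    (hcols2 : ∀ j : Fin β, ∃ v ∈ C, v.2 j ≠ 0)
    (hne : ∃ v ∈ C, v ≠ 0) :
    Nat.card ↥C = 2 ∧ (C : Set (V α β)) = {0, allone α β} ∧ m = α + 2 * β := by
  obtain ⟨v₀, hv₀C, hv₀ne⟩ := hne
  have hm1 : ((m : ℕ) : ZMod 2) = 1 := by
    obtain ⟨t, ht⟩ := hmodd
    subst ht; push_cast
    rw [show ((2:ZMod 2)) = 0 by decide]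
    simp
  -- uniqueness of the nonzero codeword
  have huniq : ∀ v ∈ C, v ≠ 0 → v = v₀ := by
    intro v hvC hvne
    by_contra hvv
    have hsum : v + v₀ ∈ C := C.add_mem hvC hv₀C
    have hsumne : v + v₀ ≠ 0 := by
      intro h0
      apply hvv
      have : v + (v₀ + v₀) = 0 + v₀ := by rw [← add_assoc, h0, zero_add]
      rwa [add_self_V, add_zero, zero_add] at this
    have e1 := wLvec_parity v
    have e2 := wLvec_parity v₀
    have e3 := wLvec_parity (v + v₀)
    rw [hone v hvC hvne, hm1] at e1
    rw [hone v₀ hv₀C hv₀ne, hm1] at e2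
    rw [hone _ hsum hsumne, hm1] at e3
    have hadd : (∑ i, (v + v₀).1 i) + ∑ j, ((v + v₀).2 j).fst
        = ((∑ i, v.1 i) + ∑ j, (v.2 j).fst) + ((∑ i, v₀.1 i) + ∑ j, (v₀.2 j).fst) := by
      simp [Finset.sum_add_distrib]
      ring
    rw [hadd, ← e1, ← e2] at e3
    exact absurd e3 (by decide)
  have hmem : ∀ v, v ∈ C ↔ v = 0 ∨ v = v₀ := by
    intro v
    constructor
    · intro hv
      by_cases h : v = 0
      · exact Or.inl h
      · exact Or.inr (huniq v hv h)
    · rintro (rfl | rfl)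
      · exact C.zero_mem
      · exact hv₀C
  -- v₀ = allone
  have h1 : ∀ i : Fin α, v₀.1 i = 1 := by
    intro i
    obtain ⟨v, hvC, hvi⟩ := hcols1 i
    have hvne : v ≠ 0 := by rintro rfl; exact hvi rfl
    rw [huniq v hvC hvne] at hvi
    rcases zmod2_cases (v₀.1 i) with h | h
    · exact absurd h hvi
    · exact h
  have heps0 : rsmul eps v₀ = 0 := by
    have hw : rsmul eps v₀ ∈ C := hsmul eps v₀ hv₀C
    rcases (hmem _).1 hw with h | h
    · exact h
    · exfalso
      -- v₀ = rsmul eps v₀, so v₀ = rsmul eps (rsmul eps v₀) = 0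
      apply hv₀ne
      have h2 : rsmul eps (rsmul eps v₀) = v₀ := (congrArg (rsmul eps) h).trans h
      have : rsmul eps (rsmul eps v₀) = 0 := by
        unfold rsmul
        ext i
        · simp
        · show (eps * (eps * v₀.2 i)).fst = (0 : Ru).fst
          simp [← mul_assoc]
        · show (eps * (eps * v₀.2 i)).snd = (0 : Ru).snd
          simp [← mul_assoc]
      rw [← h2]; exact this
  have h2 : ∀ j : Fin β, v₀.2 j = eps := by
    intro j
    obtain ⟨v, hvC, hvj⟩ := hcols2 j
    have hvne : v ≠ 0 := by rintro rfl; exact hvj rfl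
    rw [huniq v hvC hvne] at hvj
    have hfst : (v₀.2 j).fst = 0 := by
      have := congrArg (fun w : V α β => w.2 j) heps0
      have h3 : eps * v₀.2 j = 0 := this
      have := congrArg TrivSqZeroExt.snd h3
      simpa using this
    have hsnd : (v₀.2 j).snd = 1 := by
      rcases zmod2_cases (v₀.2 j).snd with h | h
      · exfalso; apply hvj; ext <;> simp [hfst, h]
      · exact h
    ext <;> simp [hfst, hsnd]
  have hv₀ : v₀ = allone α β := by
    ext i
    · exact h1 i
    · show (v₀.2 i).fst = ((allone α β).2 i).fst
      simp [h2 i, allone]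
    · show (v₀.2 i).snd = ((allone α β).2 i).snd
      simp [h2 i, allone]
  subst hv₀
  have hset : (C : Set (V α β)) = {0, allone α β} := by
    ext v
    simp only [SetLike.mem_coe, Set.mem_insert_iff, Set.mem_singleton_iff]
    exact hmem v
  have hm : m = α + 2 * β := by
    rw [← hone _ hv₀C hv₀ne]
    unfold wLvec allone wL
    simp [Finset.sum_const]
    ring
  refine ⟨?_, hset, hm⟩
  have hcc : Nat.card ↥C = (C : Set (V α β)).ncard := Nat.card_coe_set_eq _
  rw [hcc, hset, Set.ncard_pair (Ne.symm hv₀ne)]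
end

section
/- Let C be an additive code in Z₂^α × R^β such that every nonzero codeword has even Lee weight. Then (1,...,1 | u,...,u) ∈ C^⊥, where C^⊥ = {w : v·w = 0 for all v ∈ C}. -/
open DualNumber

/-- if every nonzero codeword of an additive code `C ⊆ ℤ₂^α × R^β` has
even Lee weight, then `(1,…,1 | u,…,u) ∈ C^⊥`. -/
theorem allone_mem_dual (α β : ℕ) (C : AddSubgroup (V α β))
    (hsmul : ∀ (c : Ru) (v : V α β), v ∈ C → rsmul c v ∈ C)
    (heven : ∀ v ∈ C, v ≠ 0 → Even (wLvec v)) :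
    allone α β ∈ dualSet (C : Set (V α β)) := by
  intro v hv
  have hE : Even (wLvec v) := by
    by_cases h : v = 0
    · subst h
      simp [wLvec, wL, Prod.fst, Prod.snd]
    · exact heven v hv h
  have hcast : ((wLvec v : ℕ) : ZMod 2) = 0 := by
    obtain ⟨k, hk⟩ := hE
    simp [hk]
    ring_nf
    simp [show ((2:ZMod 2)) = 0 from rfl]
  have hwL : ∀ x : Ru, ((wL x : ℕ) : ZMod 2) = x.fst := by
    intro x
    unfold wL
    by_cases h1 : x.fst = 0
    · by_cases h2 : x.snd = 0 <;> simp [h1, h2] <;> decide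
    · have : x.fst = 1 := by
        revert h1; generalize x.fst = a; revert a; decide
      simp [h1, this]
  have hbin : ∀ a : R2, (if a ≠ 0 then (1:ZMod 2) else 0) = a := by decide
  have hsum : (∑ i, v.1 i) + (∑ j, (v.2 j).fst) = (0 : ZMod 2) := by
    have := hcast
    unfold wLvec at this
    push_cast at this
    rw [Finset.sum_congr rfl (fun i _ => hbin (v.1 i)),
        Finset.sum_congr rfl (fun j _ => hwL (v.2 j))] at this
    exact this
  have hmul : ∀ x : Ru, x * eps = TrivSqZeroExt.inr x.fst := by
    intro x
    ext <;> simp [TrivSqZeroExt.snd_mul]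
  unfold ip allone
  have h1 : (∑ i, TrivSqZeroExt.inl (v.1 i * 1) : Ru) = TrivSqZeroExt.inl (∑ i, v.1 i) := by
    simp only [mul_one]
    exact (map_sum (TrivSqZeroExt.inlHom R2 R2) _ _).symm
  have h2 : (∑ j, v.2 j * eps : Ru) = TrivSqZeroExt.inr (∑ j, (v.2 j).fst) := by
    rw [Finset.sum_congr rfl (fun j _ => hmul (v.2 j))]
    exact (map_sum (TrivSqZeroExt.inrHom R2 R2).toAddMonoidHom _ _).symm
  rw [h1, h2]
  have h3 : (eps * TrivSqZeroExt.inl (∑ i, v.1 i) : Ru) = TrivSqZeroExt.inr (∑ i, v.1 i) := by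
    ext <;> simp [TrivSqZeroExt.snd_mul]
  rw [h3, ← TrivSqZeroExt.inr_add, hsum]
  simp
end
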